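/- Let f ∈ C²_c([0,∞)), and define A f(λ) = β(λ_∞ - λ) f'(λ) + λ ∫ (f(λ + αz) - f(λ)) dν(z), and T^N f as the one-step operator of the exponential-kernel discrete Hawkes chain with step h_N = T/N. Then ‖(T^N f - f)/h_N - A f‖_∞ → 0 as N → ∞. -/

import Mathlib

open MeasureTheory Filter

/-- One-step transition operator of the exponential-kernel discrete Hawkes chain with
step `h`. -/
noncomputable def dthpStepExp (lamInf α β h : ℝ) (ν : Measure ℝ) (f : ℝ → ℝ)
    (y : ℝ) : ℝ :=
  f (lamInf * (1 - Real.exp (-β * h)) + y * Real.exp (-β * h)) * (1 - y * h) *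
      (if y * h < 1 then 1 else 0) +
    (∫ z, f (lamInf * (1 - Real.exp (-β * h)) + (y + α * z) * Real.exp (-β * h)) ∂ν) *
      (y * h * (if y * h < 1 then 1 else 0) + (if 1 ≤ y * h then 1 else 0))

/-- Infinitesimal generator of the exponential Hawkes intensity. -/
noncomputable def hawkesGenExp (lamInf α β : ℝ) (ν : Measure ℝ) (f : ℝ → ℝ)
    (y : ℝ) : ℝ :=
  β * (lamInf - y) * deriv f y + y * ∫ z, (f (y + α * z) - f y) ∂ν

set_option maxHeartbeats 1000000 in
/-- For `f ∈ C²_c([0,∞))`, the discrete generators `(T^N f - f)/h_N` of the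
exponential-kernel discrete Hawkes chain converge uniformly on `[0, ∞)` to the
generator `A f` of the continuous Hawkes intensity, as `N → ∞` (with `h_N = T/N`). -/
theorem dthp_generator_convergence_exp
    (lamInf α β T : ℝ) (hlam : 0 < lamInf) (hα : 0 < α) (hβ : 0 < β) (hT : 0 < T)
    (ν : Measure ℝ) [IsProbabilityMeasure ν]
    (hνsupp : ν (Set.Iio 0) = 0) (hνmean : Integrable id ν)
    (f : ℝ → ℝ) (hf : ContDiff ℝ 2 f) (hsupp : HasCompactSupport f) :
    Tendsto
      (fun N : ℕ => ⨆ y : {y : ℝ // 0 ≤ y},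
        |(dthpStepExp lamInf α β (T / N) ν f y - f y) / (T / N) -
          hawkesGenExp lamInf α β ν f y|)
      atTop (nhds 0) := by
  -- basic regularity facts
  have hfc : Continuous f := hf.continuous
  have hder : Differentiable ℝ f := (hf.of_le one_le_two).differentiable one_ne_zero
  have hder' : Differentiable ℝ (deriv f) := by
    have h2 : ContDiff ℝ ((1 : ℕ∞)+1) f := by exact_mod_cast hf
    exact ((contDiff_succ_iff_deriv.mp h2).2.2.differentiable one_ne_zero)
  have hf'c : Continuous (deriv f) := hf.continuous_deriv one_le_two
  -- bounds
  obtain ⟨K0, hK0⟩ := hsupp.exists_bound_of_continuous hfc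
  obtain ⟨K1, hK1⟩ := (hsupp.deriv).exists_bound_of_continuous hf'c
  have hf''c : Continuous (deriv (deriv f)) := by
    have h2 : ContDiff ℝ ((1 : ℕ∞)+1) f := by exact_mod_cast hf
    exact ((contDiff_succ_iff_deriv.mp h2).2.2).continuous_deriv le_rfl
  obtain ⟨K2, hK2⟩ := (hsupp.deriv.deriv).exists_bound_of_continuous hf''c
  have hK0n : 0 ≤ K0 := le_trans (norm_nonneg _) (hK0 0)
  have hK1n : 0 ≤ K1 := le_trans (norm_nonneg _) (hK1 0)
  have hK2n : 0 ≤ K2 := le_trans (norm_nonneg _) (hK2 0)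
  simp only [Real.norm_eq_abs] at hK0 hK1 hK2
  -- Lipschitz bounds
  have lip_f : ∀ a b : ℝ, |f a - f b| ≤ K1 * |a - b| := by
    intro a b
    have := Convex.norm_image_sub_le_of_norm_deriv_le (f := f) (C := K1)
      (fun x _ => hder x) (fun x _ => by simpa [Real.norm_eq_abs] using hK1 x)
      convex_univ (Set.mem_univ b) (Set.mem_univ a)
    simpa [Real.norm_eq_abs] using this
  have lip_f' : ∀ a b : ℝ, |deriv f a - deriv f b| ≤ K2 * |a - b| := by
    intro a b
    have := Convex.norm_image_sub_le_of_norm_deriv_le (f := deriv f) (C := K2)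
      (fun x _ => hder' x) (fun x _ => by simpa [Real.norm_eq_abs] using hK2 x)
      convex_univ (Set.mem_univ b) (Set.mem_univ a)
    simpa [Real.norm_eq_abs] using this
  -- Taylor bound
  have taylor : ∀ x δ : ℝ, |f (x + δ) - f x - deriv f x * δ| ≤ K2 * |δ| * |δ| := by
    intro x δ
    set F : ℝ → ℝ := fun u => f u - deriv f x * u with hF
    have hFd : ∀ u : ℝ, HasDerivAt F (deriv f u - deriv f x) u := by
      intro u
      have h1 : HasDerivAt (fun u : ℝ => deriv f x * u) (deriv f x * 1) u :=
        (hasDerivAt_id u).const_mul (deriv f x)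
      have h2 := (hder u).hasDerivAt.sub h1; rw [mul_one] at h2; exact h2
    have key := Convex.norm_image_sub_le_of_norm_deriv_le (f := F) (C := K2 * |δ|)
      (s := Metric.closedBall x |δ|)
      (fun u _ => (hFd u).differentiableAt)
      (fun u hu => by
        rw [(hFd u).deriv]
        have : |u - x| ≤ |δ| := by
          simpa [Real.dist_eq] using Metric.mem_closedBall.mp hu
        calc ‖deriv f u - deriv f x‖ ≤ K2 * |u - x| := by
              simpa [Real.norm_eq_abs] using lip_f' u x
          _ ≤ K2 * |δ| := by apply mul_le_mul_of_nonneg_left this hK2n)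
      (convex_closedBall x |δ|)
      (show x ∈ Metric.closedBall x |δ| from Metric.mem_closedBall_self (abs_nonneg δ))
      (show x + δ ∈ Metric.closedBall x |δ| by simp [Metric.mem_closedBall, Real.dist_eq])
    have heq : F (x + δ) - F x = f (x + δ) - f x - deriv f x * δ := by
      simp only [hF]; ring
    rw [Real.norm_eq_abs, heq] at key
    simpa [Real.norm_eq_abs] using key
  -- support radius
  obtain ⟨M0, hM0⟩ := hsupp.isBounded.subset_closedBall 0
  have hfz : ∀ x : ℝ, M0 < |x| → f x = 0 := by
    intro x hx
    apply image_eq_zero_of_notMem_tsupport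
    intro hmem
    have := hM0 hmem
    simp [Metric.mem_closedBall, Real.dist_eq] at this
    linarith
  have hf'z : ∀ x : ℝ, M0 < |x| → deriv f x = 0 := by
    intro x hx
    by_contra h
    have hmem : x ∈ tsupport f := support_deriv_subset (by simpa using h)
    have := hM0 hmem
    simp [Metric.mem_closedBall, Real.dist_eq] at this
    linarith
  set M : ℝ := M0 ⊔ 0 with hM
  have hMn : 0 ≤ M := le_max_right _ _
  have hfz' : ∀ x : ℝ, M < |x| → f x = 0 := fun x hx => hfz x (lt_of_le_of_lt (le_max_left _ _) hx)
  have hf'z' : ∀ x : ℝ, M < |x| → deriv f x = 0 := fun x hx => hf'z x (lt_of_le_of_lt (le_max_left _ _) hx)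
  -- a.e. nonnegativity of ν and its mean
  have haez : ∀ᵐ z ∂ν, 0 ≤ z := by
    rw [ae_iff]
    convert hνsupp using 2
    ext z; simp [not_le]
  set μ : ℝ := ∫ z, z ∂ν with hμ
  have hμn : 0 ≤ μ := integral_nonneg_of_ae haez
  -- constants
  set R : ℝ := (M + 1) * Real.exp (β * T) with hRdef
  have hexpT : (1:ℝ) ≤ Real.exp (β * T) := Real.one_le_exp (by positivity)
  have hR : 0 < R := by
    rw [hRdef]; exact mul_pos (by linarith) (Real.exp_pos _)
  have hMR : M + 1 ≤ R := by
    rw [hRdef]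
    calc M + 1 = (M + 1) * 1 := by ring
      _ ≤ (M + 1) * Real.exp (β * T) :=
        mul_le_mul_of_nonneg_left hexpT (by linarith)
  have hL : 0 < lamInf + R := by linarith
  set C1 : ℝ := K2 * (lamInf + R)^2 * β^2 + K1 * (lamInf + R) * β^2 with hC1def
  set C2 : ℝ := R * K1 * (lamInf + R) * β with hC2def
  set C3 : ℝ := R * K1 * β * (lamInf + R + α * μ) with hC3def
  set C : ℝ := C1 + C2 + C3 with hCdef
  have hC1n : 0 ≤ C1 := by
    apply add_nonneg
    · exact mul_nonneg (mul_nonneg hK2n (sq_nonneg _)) (sq_nonneg _)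
    · exact mul_nonneg (mul_nonneg hK1n hL.le) (sq_nonneg _)
  have hC2n : 0 ≤ C2 :=
    mul_nonneg (mul_nonneg (mul_nonneg hR.le hK1n) hL.le) hβ.le
  have hC3n : 0 ≤ C3 := by
    apply mul_nonneg (mul_nonneg (mul_nonneg hR.le hK1n) hβ.le)
    have : 0 ≤ α * μ := mul_nonneg hα.le hμn
    linarith
  have hCn : 0 ≤ C := by rw [hCdef]; linarith
  -- key pointwise bound
  have key : ∀ h : ℝ, 0 < h → h ≤ T → β * h ≤ 1 → R * h < 1 → ∀ y : ℝ, 0 ≤ y →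
      |(dthpStepExp lamInf α β h ν f y - f y) / h - hawkesGenExp lamInf α β ν f y| ≤ C * h := by
    intro h hh hhT hβh hRh y hy
    have hβh0 : 0 ≤ β * h := mul_nonneg hβ.le hh.le
    set e : ℝ := Real.exp (-β * h) with he
    have he0 : 0 < e := Real.exp_pos _
    have he1 : e ≤ 1 := by
      rw [he]
      calc Real.exp (-β * h) ≤ Real.exp 0 := Real.exp_le_exp.mpr (by linarith)
        _ = 1 := Real.exp_zero
    have h1e : 0 ≤ 1 - e := by linarith
    have h1e' : 1 - e ≤ β * h := by
      have h2 := Real.add_one_le_exp (-β * h)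
      rw [← he] at h2
      linarith
    have habs : |1 - e - β * h| ≤ β ^ 2 * h ^ 2 := by
      have h1 : |(-β * h)| ≤ 1 := by
        rw [neg_mul, abs_neg, abs_of_nonneg hβh0]; exact hβh
      have h2 := Real.abs_exp_sub_one_sub_id_le h1
      rw [← he] at h2
      have h3 : |1 - e - β * h| = |e - 1 - -β * h| := by
        rw [show (1 - e - β * h) = -(e - 1 - -β * h) by ring, abs_neg]
      rw [h3]
      calc |e - 1 - -β * h| ≤ (-β * h) ^ 2 := h2
        _ = β ^ 2 * h ^ 2 := by ring
    by_cases hyR : R < y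
    · -- far-out region: everything vanishes
      have heT : Real.exp (-β * T) ≤ e := by
        rw [he]; apply Real.exp_le_exp.mpr
        have := mul_le_mul_of_nonneg_left hhT hβ.le
        linarith
      have hyM : M < y := by linarith
      have hRe : R * Real.exp (-β * T) = M + 1 := by
        rw [hRdef, mul_assoc, ← Real.exp_add]
        simp
      have hbM : M < lamInf * (1 - e) + y * e := by
        have h1 : R * Real.exp (-β * T) ≤ y * e := by
          apply mul_le_mul hyR.le heT (Real.exp_pos _).le (by linarith)
        linarith [mul_nonneg hlam.le h1e, hRe]
      have hfb : f (lamInf * (1 - e) + y * e) = 0 :=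
        hfz' _ (by
          rwa [abs_of_nonneg (by
            linarith [mul_nonneg hlam.le h1e, mul_nonneg hy he0.le])])
      have hfy : f y = 0 := hfz' y (by rwa [abs_of_nonneg hy])
      have hf'y : deriv f y = 0 := hf'z' y (by rwa [abs_of_nonneg hy])
      have hint1 : ∫ z, f (lamInf * (1 - e) + (y + α * z) * e) ∂ν = 0 := by
        apply integral_eq_zero_of_ae
        filter_upwards [haez] with z hz
        simp only [Pi.zero_apply]
        apply hfz'
        have hz1 : 0 ≤ α * z * e := mul_nonneg (mul_nonneg hα.le hz) he0.le
        rw [abs_of_nonneg (by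
          linarith [mul_nonneg hlam.le h1e, mul_nonneg hy he0.le])]
        linarith [hbM, hz1]
      have hint2 : ∫ z, (f (y + α * z) - f y) ∂ν = 0 := by
        apply integral_eq_zero_of_ae
        filter_upwards [haez] with z hz
        have hz2 : 0 ≤ α * z := mul_nonneg hα.le hz
        simp only [Pi.zero_apply]
        rw [hfy, hfz' (y + α * z) (by rw [abs_of_nonneg (by linarith)]; linarith), sub_zero]
      unfold dthpStepExp hawkesGenExp
      rw [← he, hfb, hint1, hint2, hfy, hf'y]
      simp only [zero_mul, mul_zero, add_zero, zero_add, sub_zero, zero_div, sub_self, abs_zero]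
      exact mul_nonneg hCn hh.le
    · push_neg at hyR
      have hylt : y * h < 1 :=
        lt_of_le_of_lt (mul_le_mul_of_nonneg_right hyR hh.le) hRh
      set b : ℝ := lamInf * (1 - e) + y * e with hbdef
      set δ : ℝ := (lamInf - y) * (1 - e) with hδdef
      have hbδ : y + δ = b := by rw [hbdef, hδdef]; ring
      have habsly : |lamInf - y| ≤ lamInf + R := abs_le.mpr ⟨by linarith, by linarith⟩
      have hδb : |δ| ≤ (lamInf + R) * (β * h) := by
        rw [hδdef, abs_mul, abs_of_nonneg h1e]
        exact mul_le_mul habsly h1e' h1e hL.le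
      set I : ℝ := ∫ z, f (lamInf * (1 - e) + (y + α * z) * e) ∂ν with hI
      set J : ℝ := ∫ z, f (y + α * z) ∂ν with hJ
      have mInt : ∀ g : ℝ → ℝ, Continuous g → Integrable (fun z => f (g z)) ν := by
        intro g hg
        apply (integrable_const K0).mono' ((hfc.comp hg).aestronglyMeasurable)
        exact ae_of_all _ fun z => by simpa [Real.norm_eq_abs] using hK0 (g z)
      have int1 : Integrable (fun z => f (lamInf * (1 - e) + (y + α * z) * e)) ν :=
        mInt _ (by continuity)
      have int2 : Integrable (fun z => f (y + α * z)) ν := mInt _ (by continuity)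
      have hiz : Integrable (fun z : ℝ => α * z) ν := by
        simpa using hνmean.const_mul α
      have intlin : Integrable (fun z : ℝ => lamInf + R + α * z) ν :=
        (integrable_const _).add hiz
      have int3 : Integrable (fun z : ℝ => K1 * (1 - e) * (lamInf + R + α * z)) ν :=
        intlin.const_mul _
      have hJint : ∫ z, (f (y + α * z) - f y) ∂ν = J - f y := by
        rw [integral_sub int2 (integrable_const _), integral_const]
        simp [hJ]
      have hIJ : |I - J| ≤ K1 * (1 - e) * (lamInf + R + α * μ) := by
        have h1 : I - J = ∫ z, (f (lamInf * (1 - e) + (y + α * z) * e) - f (y + α * z)) ∂ν :=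
          (integral_sub int1 int2).symm
        rw [h1]
        have h2 : |∫ z, (f (lamInf * (1 - e) + (y + α * z) * e) - f (y + α * z)) ∂ν| ≤
            ∫ z, |f (lamInf * (1 - e) + (y + α * z) * e) - f (y + α * z)| ∂ν := by
          simpa [Real.norm_eq_abs] using
            norm_integral_le_integral_norm (fun z => f (lamInf * (1 - e) + (y + α * z) * e) - f (y + α * z)) (μ := ν)
        refine h2.trans ?_
        have h3 : ∫ z, |f (lamInf * (1 - e) + (y + α * z) * e) - f (y + α * z)| ∂ν ≤
            ∫ z, K1 * (1 - e) * (lamInf + R + α * z) ∂ν := by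
          apply integral_mono_ae ((int1.sub int2).abs) int3
          filter_upwards [haez] with z hz
          have hargz : 0 ≤ α * z := mul_nonneg hα.le hz
          calc |f (lamInf * (1 - e) + (y + α * z) * e) - f (y + α * z)|
              ≤ K1 * |lamInf * (1 - e) + (y + α * z) * e - (y + α * z)| := lip_f _ _
            _ = K1 * (|lamInf - (y + α * z)| * (1 - e)) := by
                rw [show lamInf * (1 - e) + (y + α * z) * e - (y + α * z)
                    = (lamInf - (y + α * z)) * (1 - e) by ring, abs_mul, abs_of_nonneg h1e]
            _ ≤ K1 * (1 - e) * (lamInf + R + α * z) := by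
                have hb1 : |lamInf - (y + α * z)| ≤ lamInf + R + α * z :=
                  abs_le.mpr ⟨by linarith, by linarith⟩
                have := mul_le_mul_of_nonneg_left hb1 (mul_nonneg hK1n h1e)
                linarith [this]
        refine h3.trans ?_
        rw [integral_const_mul]
        have h4 : ∫ z, (lamInf + R + α * z) ∂ν = lamInf + R + α * μ := by
          rw [integral_add (integrable_const _) hiz, integral_const, integral_const_mul, ← hμ]
          simp
        rw [h4]
      -- decomposition
      have hstep : dthpStepExp lamInf α β h ν f y = f b * (1 - y * h) + I * (y * h) := by
        unfold dthpStepExp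
        rw [← he, if_pos hylt, if_neg (not_le.mpr hylt), ← hbdef, ← hI]
        ring
      have hgen : hawkesGenExp lamInf α β ν f y
          = β * (lamInf - y) * deriv f y + y * (J - f y) := by
        unfold hawkesGenExp; rw [hJint]
      set X1 : ℝ := (f b - f y) / h - β * (lamInf - y) * deriv f y with hX1
      set X2 : ℝ := y * (f y - f b) with hX2
      set X3 : ℝ := y * (I - J) with hX3
      have hdecomp : (dthpStepExp lamInf α β h ν f y - f y) / h - hawkesGenExp lamInf α β ν f y
          = X1 + X2 + X3 := by
        rw [hstep, hgen, hX1, hX2, hX3]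
        field_simp
        ring
      have htay := taylor y δ
      rw [hbδ] at htay
      have hbX1 : |X1| ≤ C1 * h := by
        have hexp : X1 = ((f b - f y - deriv f y * δ)
            + deriv f y * ((lamInf - y) * (1 - e - β * h))) / h := by
          rw [hX1, hδdef]; field_simp; ring
        rw [hexp, abs_div, abs_of_pos hh, div_le_iff₀ hh]
        calc |f b - f y - deriv f y * δ + deriv f y * ((lamInf - y) * (1 - e - β * h))|
            ≤ |f b - f y - deriv f y * δ| + |deriv f y| * (|lamInf - y| * |1 - e - β * h|) := by
              refine (abs_add_le _ _).trans ?_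
              rw [abs_mul, abs_mul]
          _ ≤ K2 * |δ| * |δ| + K1 * ((lamInf + R) * (β ^ 2 * h ^ 2)) := by
              refine add_le_add htay ?_
              apply mul_le_mul (hK1 y) (mul_le_mul habsly habs (abs_nonneg _) hL.le)
                (mul_nonneg (abs_nonneg _) (abs_nonneg _)) hK1n
          _ ≤ C1 * h * h := by
              rw [hC1def]
              have hδb2 : |δ| * |δ| ≤ ((lamInf + R) * (β * h)) * ((lamInf + R) * (β * h)) :=
                mul_le_mul hδb hδb (abs_nonneg _) (by positivity)
              linarith [mul_le_mul_of_nonneg_left hδb2 hK2n]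
      have hbX2 : |X2| ≤ C2 * h := by
        rw [hX2, abs_mul, abs_of_nonneg hy]
        have h1 : |f y - f b| ≤ K1 * |δ| := by
          have h0 := lip_f y b
          have h0' : |y - b| = |δ| := by rw [← hbδ]; simp [abs_sub_comm]
          rwa [h0'] at h0
        calc y * |f y - f b| ≤ R * (K1 * |δ|) :=
              mul_le_mul hyR h1 (abs_nonneg _) hR.le
          _ ≤ R * (K1 * ((lamInf + R) * (β * h))) := by
              apply mul_le_mul_of_nonneg_left (mul_le_mul_of_nonneg_left hδb hK1n) hR.le
          _ = C2 * h := by rw [hC2def]; ring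
      have hbX3 : |X3| ≤ C3 * h := by
        rw [hX3, abs_mul, abs_of_nonneg hy]
        calc y * |I - J| ≤ R * (K1 * (1 - e) * (lamInf + R + α * μ)) :=
              mul_le_mul hyR hIJ (abs_nonneg _) hR.le
          _ ≤ C3 * h := by
              rw [hC3def]
              have hpos : 0 ≤ lamInf + R + α * μ := by
                linarith [mul_nonneg hα.le hμn]
              have h5 : (R * K1) * (1 - e) ≤ (R * K1) * (β * h) :=
                mul_le_mul_of_nonneg_left h1e' (mul_nonneg hR.le hK1n)
              have h6 := mul_le_mul_of_nonneg_right h5 hpos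
              linarith [h6]
      rw [hdecomp]
      calc |X1 + X2 + X3| ≤ |X1| + |X2| + |X3| :=
            (abs_add_le _ _).trans (add_le_add_left (abs_add_le _ _) _)
        _ ≤ C1 * h + C2 * h + C3 * h := by linarith
        _ = C * h := by rw [hCdef]; ring
  -- final squeeze
  haveI : Nonempty {y : ℝ // 0 ≤ y} := ⟨⟨0, le_refl 0⟩⟩
  have htv : Tendsto (fun N : ℕ => T / (N : ℝ)) atTop (nhds 0) :=
    tendsto_const_div_atTop_nhds_zero_nat T
  have ev1 : ∀ᶠ N : ℕ in atTop, 0 < T / (N : ℝ) ∧ T / (N : ℝ) ≤ T := by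
    filter_upwards [eventually_ge_atTop 1] with N hN
    have hN' : (1 : ℝ) ≤ N := by exact_mod_cast hN
    exact ⟨div_pos hT (by linarith), div_le_self hT.le hN'⟩
  have ev2 : ∀ᶠ N : ℕ in atTop, β * (T / (N : ℝ)) < 1 := by
    have : Tendsto (fun N : ℕ => β * (T / (N : ℝ))) atTop (nhds 0) := by
      simpa using htv.const_mul β
    exact this.eventually_lt_const one_pos
  have ev3 : ∀ᶠ N : ℕ in atTop, R * (T / (N : ℝ)) < 1 := by
    have : Tendsto (fun N : ℕ => R * (T / (N : ℝ))) atTop (nhds 0) := by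
      simpa using htv.const_mul R
    exact this.eventually_lt_const one_pos
  apply tendsto_of_tendsto_of_tendsto_of_le_of_le' (tendsto_const_nhds (x := (0:ℝ)))
    (show Tendsto (fun N : ℕ => C * (T / (N : ℝ))) atTop (nhds 0) by simpa using htv.const_mul C)
  · exact Eventually.of_forall fun N => Real.iSup_nonneg fun y => abs_nonneg _
  · filter_upwards [ev1, ev2, ev3] with N h1 h2 h3
    exact ciSup_le fun y => key (T / (N : ℝ)) h1.1 h1.2 h2.le h3 y y.2
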